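/- Explicit derivative of the flow of an ODE with additive continuous forcing: Let 0 ≤ s ≤ T, let w : [0,T] → ℝ be continuous, and let f : [0,T]×ℝ → ℝ be continuous, continuously differentiable in the second variable, with ∂_y f bounded and continuous. Suppose that for each x ∈ ℝ, X^x : [s,T] → ℝ is the continuous function satisfying X^x_t = x + ∫_s^t f(u, X^x_u) du + w(t) − w(s) for all t ∈ [s,T]. Then for each t ∈ [s,T], the map x ↦ X^x_t is differentiable on ℝ and its derivative equals ∂_x X^x_t = exp( ∫_s^t ∂_y f(u, X^x_u) du ). -/

import Mathlib

open MeasureTheory Set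

/-- Mean value theorem in integral form. -/
lemma mvt_integral {f : ℝ → ℝ} (hd : ∀ y, DifferentiableAt ℝ f y)
    (hc : Continuous (deriv f)) (a b : ℝ) :
    f b - f a = (b - a) * ∫ θ in (0:ℝ)..1, deriv f (a + θ * (b - a)) := by
  rcases eq_or_ne b a with h | h
  · simp [h]
  have hne : b - a ≠ 0 := sub_ne_zero.mpr h
  have h1 : (∫ y in a..b, deriv f y) = f b - f a :=
    intervalIntegral.integral_deriv_eq_sub (fun y _ => hd y) (hc.intervalIntegrable a b)
  have h3 : (∫ θ in (0:ℝ)..1, deriv f (a + θ * (b - a)))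
      = ∫ θ in (0:ℝ)..1, deriv f ((b - a) * θ + a) := by
    congr 1; funext θ; congr 1; ring
  have h2 : (∫ θ in (0:ℝ)..1, deriv f ((b - a) * θ + a))
      = (b - a)⁻¹ • ∫ y in (b - a) * 0 + a..(b - a) * 1 + a, deriv f y :=
    intervalIntegral.integral_comp_mul_add (deriv f) hne a
  rw [h3, h2, show (b - a) * 0 + a = a by ring, show (b - a) * 1 + a = b by ring, h1,
    smul_eq_mul, ← mul_assoc, mul_inv_cancel₀ hne, one_mul]

/-- **Explicit derivative of the flow of an ODE with additive continuous forcing.**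
Let `f : [0,T]×ℝ → ℝ` be continuous, `C¹` in the second variable with bounded and
continuous partial derivative, `w` continuous, and for each `x` let `X^x` solve
`X^x_t = x + ∫_s^t f(u, X^x_u) du + w(t) − w(s)` on `[s,T]`. Then for each
`t ∈ [s,T]`, the map `x ↦ X^x_t` is differentiable with derivative
`exp(∫_s^t ∂_y f(u, X^x_u) du)`. -/
theorem flow_derivative_ODE
    (T s : ℝ) (hs : 0 ≤ s) (hsT : s ≤ T)
    (w : ℝ → ℝ) (hw : Continuous w)
    (f : ℝ → ℝ → ℝ)
    (hfcont : Continuous fun q : ℝ × ℝ => f q.1 q.2)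
    (hfdiff : ∀ t y : ℝ, DifferentiableAt ℝ (f t) y)
    (hf'cont : Continuous fun q : ℝ × ℝ => deriv (f q.1) q.2)
    (hf'bdd : ∃ L : ℝ, ∀ t y : ℝ, |deriv (f t) y| ≤ L)
    (X : ℝ → ℝ → ℝ)
    (hXcont : ∀ x : ℝ, ContinuousOn (X x) (Icc s T))
    (hXeq : ∀ x : ℝ, ∀ t ∈ Icc s T,
      X x t = x + (∫ u in s..t, f u (X x u)) + (w t - w s)) :
    ∀ t ∈ Icc s T, ∀ x : ℝ,
      HasDerivAt (fun y : ℝ => X y t)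
        (Real.exp (∫ u in s..t, deriv (f u) (X x u))) x := by
  obtain ⟨L, hL⟩ := hf'bdd
  have hL0 : 0 ≤ L := le_trans (abs_nonneg _) (hL 0 0)
  intro t ht x
  -- clamp to [s, T]
  set π : ℝ → ℝ := fun u => max s (min u T) with hπ
  have hπmem : ∀ u, π u ∈ Icc s T := fun u =>
    ⟨le_max_left _ _, max_le hsT (min_le_right u T)⟩
  have hπid : ∀ u ∈ Icc s T, π u = u := fun u hu => by
    simp only [hπ]
    rw [min_eq_left hu.2, max_eq_right hu.1]
  have hπcont : Continuous π := continuous_const.max (continuous_id.min continuous_const)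
  set A : ℝ → ℝ → ℝ := fun y u => X y (π u) with hA
  have hAcont : ∀ y, Continuous (A y) := fun y =>
    (hXcont y).comp_continuous hπcont hπmem
  have hAeq : ∀ y : ℝ, ∀ u ∈ Icc s T, A y u = X y u := fun y u hu => by
    simp only [hA, hπid u hu]
  set g : ℝ → ℝ → ℝ :=
    fun y u => ∫ θ in (0:ℝ)..1, deriv (f u) (A x u + θ * (A y u - A x u)) with hg
  have hgcont : ∀ y, Continuous (g y) := by
    intro y
    apply intervalIntegral.continuous_parametric_intervalIntegral_of_continuous' ?_ 0 1
    exact hf'cont.comp (continuous_fst.prodMk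
      (((hAcont x).comp continuous_fst).add (continuous_snd.mul
        (((hAcont y).comp continuous_fst).sub ((hAcont x).comp continuous_fst)))))
  have hf'c : ∀ u : ℝ, Continuous (deriv (f u)) := fun u =>
    hf'cont.comp (continuous_const.prodMk continuous_id)
  have hgbd : ∀ y u, |g y u| ≤ L := by
    intro y u
    have := intervalIntegral.norm_integral_le_of_norm_le_const
      (a := (0:ℝ)) (b := 1) (C := L)
      (f := fun θ => deriv (f u) (A x u + θ * (A y u - A x u))) (fun θ _ => hL _ _)
    simpa using this
  -- Key formula: X y t' - X x t' = (y - x) * exp(∫ g y)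
  have key : ∀ y : ℝ, ∀ t' ∈ Icc s T,
      X y t' - X x t' = (y - x) * Real.exp (∫ u in s..t', g y u) := by
    intro y
    set Z : ℝ → ℝ := fun u => A y u - A x u with hZ
    have hZcont : Continuous Z := (hAcont y).sub (hAcont x)
    have hmvt : ∀ u, f u (A y u) - f u (A x u) = g y u * Z u := by
      intro u
      rw [mvt_integral (hfdiff u) (hf'c u) (A x u) (A y u)]
      rw [hg, hZ]; ring
    have hint : ∀ t' ∈ Icc s T, Z t' = (y - x) + ∫ u in s..t', g y u * Z u := by
      intro t' ht'
      have hsub : uIcc s t' ⊆ Icc s T := by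
        rw [uIcc_of_le ht'.1]
        exact Icc_subset_Icc le_rfl ht'.2
      have ey : (∫ u in s..t', f u (X y u)) = ∫ u in s..t', f u (A y u) :=
        intervalIntegral.integral_congr (fun u hu => by rw [hAeq y u (hsub hu)])
      have ex : (∫ u in s..t', f u (X x u)) = ∫ u in s..t', f u (A x u) :=
        intervalIntegral.integral_congr (fun u hu => by rw [hAeq x u (hsub hu)])
      have hZeq : Z t' = X y t' - X x t' := by
        rw [hZ]; simp only [hAeq y t' ht', hAeq x t' ht']
      have hcy : Continuous fun u => f u (A y u) :=
        hfcont.comp (continuous_id.prodMk (hAcont y))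
      have hcx : Continuous fun u => f u (A x u) :=
        hfcont.comp (continuous_id.prodMk (hAcont x))
      rw [hZeq, hXeq y t' ht', hXeq x t' ht']
      have : (∫ u in s..t', f u (X y u)) - (∫ u in s..t', f u (X x u))
          = ∫ u in s..t', g y u * Z u := by
        rw [ey, ex, ← intervalIntegral.integral_sub (hcy.intervalIntegrable _ _)
          (hcx.intervalIntegrable _ _)]
        exact intervalIntegral.integral_congr (fun u _ => hmvt u)
      linarith [this]
    -- solve the linear ODE
    set G : ℝ → ℝ := fun r => ∫ u in s..r, g y u with hG
    have hGd : ∀ r, HasDerivAt G (g y r) r := fun r =>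
      intervalIntegral.integral_hasDerivAt_right ((hgcont y).intervalIntegrable _ _)
        ((hgcont y).stronglyMeasurableAtFilter _ _) (hgcont y).continuousAt
    set ψ : ℝ → ℝ := fun r => (y - x) + ∫ u in s..r, g y u * Z u with hψ
    have hgZc : Continuous fun u => g y u * Z u := (hgcont y).mul hZcont
    have hψd : ∀ r, HasDerivAt ψ (g y r * Z r) r := fun r =>
      (intervalIntegral.integral_hasDerivAt_right (hgZc.intervalIntegrable _ _)
        (hgZc.stronglyMeasurableAtFilter _ _) hgZc.continuousAt).const_add (y - x)
    set h : ℝ → ℝ := fun r => ψ r * Real.exp (-G r) with hh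
    have hhd : ∀ r ∈ Icc s T, HasDerivAt h 0 r := by
      intro r hr
      have d2 : HasDerivAt (fun r => Real.exp (-G r)) (Real.exp (-G r) * (-(g y r))) r :=
        (hGd r).neg.exp
      have := (hψd r).mul d2
      refine this.congr_deriv ?_
      have hz : Z r = ψ r := hint r hr
      rw [← hz]; ring
    have hcontψ : Continuous ψ := continuous_iff_continuousAt.mpr fun r => (hψd r).continuousAt
    have hcontG : Continuous G := continuous_iff_continuousAt.mpr fun r => (hGd r).continuousAt
    have hconth : Continuous h := hcontψ.mul (Real.continuous_exp.comp hcontG.neg)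
    have hconst : ∀ r ∈ Icc s T, h r = h s :=
      constant_of_has_deriv_right_zero hconth.continuousOn
        (fun u hu => (hhd u ⟨hu.1, hu.2.le⟩).hasDerivWithinAt)
    intro t' ht'
    have h1 : ψ t' * Real.exp (-G t') = y - x := by
      have := hconst t' ht'
      simp only [hh, hψ, hG, intervalIntegral.integral_same, neg_zero, Real.exp_zero,
        mul_one, add_zero] at this
      exact this
    have hψt : ψ t' = (y - x) * Real.exp (G t') := by
      calc ψ t' = ψ t' * Real.exp (-G t') * Real.exp (G t') := by
            rw [mul_assoc, ← Real.exp_add]; simp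
        _ = (y - x) * Real.exp (G t') := by rw [h1]
    have hZeq : X y t' - X x t' = Z t' := by
      rw [hZ]; simp only [hAeq y t' ht', hAeq x t' ht']
    rw [hZeq, hint t' ht']
    rw [hψ] at hψt
    exact hψt
  -- uniform bound on the difference
  have hZbd : ∀ y u : ℝ, |A y u - A x u| ≤ |y - x| * Real.exp (L * (T - s)) := by
    intro y u
    have hm := hπmem u
    have hkey := key y (π u) hm
    have : A y u - A x u = X y (π u) - X x (π u) := rfl
    rw [this, hkey, abs_mul, abs_of_pos (Real.exp_pos _)]
    apply mul_le_mul_of_nonneg_left ?_ (abs_nonneg _)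
    apply Real.exp_le_exp.mpr
    calc (∫ v in s..π u, g y v) ≤ |∫ v in s..π u, g y v| := le_abs_self _
      _ ≤ L * |π u - s| := by
          simpa using intervalIntegral.norm_integral_le_of_norm_le_const
            (f := g y) (C := L)
            (fun v _ => by rw [Real.norm_eq_abs]; exact hgbd y v)
      _ ≤ L * (T - s) := by
          apply mul_le_mul_of_nonneg_left ?_ hL0
          rw [abs_of_nonneg (by linarith [hm.1])]
          linarith [hm.2]
  -- limit of the exponents
  have hlim : Filter.Tendsto (fun y => ∫ u in s..t, g y u) (nhds x)
      (nhds (∫ u in s..t, g x u)) := by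
    rw [Metric.tendsto_nhds_nhds]
    intro ε hε
    obtain ⟨C, hC⟩ := (isCompact_Icc (a := s) (b := T)).exists_bound_of_continuousOn (hAcont x).continuousOn
    have hUC := ((isCompact_Icc.prod isCompact_Icc).uniformContinuousOn_of_continuous
      (s := Icc s T ×ˢ Icc (-(C+1)) (C+1)) hf'cont.continuousOn)
    rw [Metric.uniformContinuousOn_iff] at hUC
    have hden : (0:ℝ) < T - s + 1 := by linarith
    set ε' : ℝ := ε / (T - s + 1) with hε'def
    have hε'pos : 0 < ε' := div_pos hε hden
    obtain ⟨δ, hδpos, hδ⟩ := hUC ε' hε'pos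
    have hexppos : (0:ℝ) < Real.exp (L * (T - s)) := Real.exp_pos _
    refine ⟨min δ 1 / Real.exp (L * (T - s)), by positivity, ?_⟩
    intro y hy
    rw [Real.dist_eq] at hy
    have hZsmall : ∀ u : ℝ, |A y u - A x u| < min δ 1 := by
      intro u
      refine lt_of_le_of_lt (hZbd y u) ?_
      rw [← lt_div_iff₀ hexppos]
      exact hy
    have hint1 : ∀ u : ℝ, IntervalIntegrable
        (fun θ => deriv (f u) (A x u + θ * (A y u - A x u))) volume 0 1 := fun u =>
      ((hf'c u).comp
        (continuous_const.add (continuous_id.mul continuous_const))).intervalIntegrable _ _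
    have hint2 : ∀ u : ℝ, IntervalIntegrable
        (fun θ => deriv (f u) (A x u + θ * (A x u - A x u))) volume 0 1 := fun u =>
      ((hf'c u).comp
        (continuous_const.add (continuous_id.mul continuous_const))).intervalIntegrable _ _
    have hptwise : ∀ u ∈ Set.uIoc s t, ‖g y u - g x u‖ ≤ ε' := by
      intro u hu
      have hu' : u ∈ Icc s T := by
        rw [uIoc_of_le ht.1] at hu
        exact ⟨hu.1.le, hu.2.trans ht.2⟩
      have hAxC : |A x u| ≤ C := by
        have hb := hC u hu'
        rwa [Real.norm_eq_abs] at hb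
      have habs := abs_le.mp hAxC
      have hAx : A x u ∈ Icc (-(C+1)) (C+1) :=
        ⟨by linarith [habs.1], by linarith [habs.2]⟩
      simp only [hg]
      rw [← intervalIntegral.integral_sub (hint1 u) (hint2 u)]
      have hbd : ∀ θ ∈ Set.uIoc (0:ℝ) 1,
          ‖deriv (f u) (A x u + θ * (A y u - A x u))
            - deriv (f u) (A x u + θ * (A x u - A x u))‖ ≤ ε' := by
        intro θ hθ
        rw [uIoc_of_le (by norm_num : (0:ℝ) ≤ 1)] at hθ
        have hθ1 : |θ| ≤ 1 := by
          rw [abs_of_pos hθ.1]; exact hθ.2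
        have hZu := hZsmall u
        have hθZ : |θ * (A y u - A x u)| ≤ |A y u - A x u| := by
          rw [abs_mul]
          calc |θ| * |A y u - A x u| ≤ 1 * |A y u - A x u| :=
                mul_le_mul_of_nonneg_right hθ1 (abs_nonneg _)
            _ = |A y u - A x u| := one_mul _
        have hq : A x u + θ * (A x u - A x u) = A x u := by ring
        have hp : A x u + θ * (A y u - A x u) ∈ Icc (-(C+1)) (C+1) := by
          have h1 : |A y u - A x u| ≤ 1 := hZu.le.trans (min_le_right _ _)
          have h2 := abs_le.mp (hθZ.trans h1)
          constructor <;> [linarith [habs.1, h2.1]; linarith [habs.2, h2.2]]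
        have hdist : dist ((u, A x u + θ * (A y u - A x u)) : ℝ × ℝ)
            ((u, A x u + θ * (A x u - A x u)) : ℝ × ℝ) < δ := by
          rw [Prod.dist_eq]
          refine max_lt (by simpa using hδpos) ?_
          simp only
          rw [hq, Real.dist_eq]
          have he : A x u + θ * (A y u - A x u) - A x u = θ * (A y u - A x u) := by ring
          rw [he]
          exact lt_of_le_of_lt hθZ (lt_of_lt_of_le hZu (min_le_left _ _))
        have hmem1 : ((u, A x u + θ * (A y u - A x u)) : ℝ × ℝ)
            ∈ Icc s T ×ˢ Icc (-(C+1)) (C+1) := Set.mem_prod.mpr ⟨hu', hp⟩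
        have hmem2 : ((u, A x u + θ * (A x u - A x u)) : ℝ × ℝ)
            ∈ Icc s T ×ˢ Icc (-(C+1)) (C+1) :=
          Set.mem_prod.mpr ⟨hu', by rw [hq]; exact hAx⟩
        have := hδ _ hmem1 _ hmem2 hdist
        rw [Real.dist_eq] at this
        rw [Real.norm_eq_abs]
        exact this.le
      have := intervalIntegral.norm_integral_le_of_norm_le_const hbd
      simpa using this
    rw [Real.dist_eq]
    rw [← intervalIntegral.integral_sub ((hgcont y).intervalIntegrable _ _)
      ((hgcont x).intervalIntegrable _ _)]
    have hb2 := intervalIntegral.norm_integral_le_of_norm_le_const hptwise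
    calc |∫ u in s..t, (g y u - g x u)| ≤ ε' * |t - s| := by simpa using hb2
      _ ≤ ε' * (T - s) := by
          apply mul_le_mul_of_nonneg_left ?_ hε'pos.le
          rw [abs_of_nonneg (by linarith [ht.1])]
          linarith [ht.2]
      _ < ε' * (T - s + 1) := by nlinarith
      _ = ε := by rw [hε'def]; field_simp
  -- final assembly
  have hgx : (∫ u in s..t, deriv (f u) (X x u)) = ∫ u in s..t, g x u := by
    apply intervalIntegral.integral_congr
    intro u hu
    have hu' : u ∈ Icc s T := by
      rw [uIcc_of_le ht.1] at hu
      exact ⟨hu.1, hu.2.trans ht.2⟩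
    simp only [hg, sub_self, mul_zero, add_zero, intervalIntegral.integral_const,
      smul_eq_mul, sub_zero, one_mul]
    rw [hAeq x u hu']
  rw [hasDerivAt_iff_tendsto_slope, hgx]
  have heq : (fun y => Real.exp (∫ u in s..t, g y u)) =ᶠ[nhdsWithin x {x}ᶜ]
      slope (fun y : ℝ => X y t) x := by
    filter_upwards [self_mem_nhdsWithin] with y hy
    have hyx : (y : ℝ) ≠ x := hy
    rw [slope_def_field, key y t ht]
    field_simp [sub_ne_zero.mpr hyx]
  exact Filter.Tendsto.congr' heq
    ((Real.continuous_exp.continuousAt.tendsto.comp hlim).mono_left nhdsWithin_le_nhds)
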